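/- Let G(z) = cos(πz)·( 1/(z − 1/2) + Σ_{k=10}^∞ ( 1/(z − 2^k + 1/2) − 1/(z − 2^k − 1/2) ) ). Then there exist a constant c > 0 and K ∈ ℕ such that for every integer k ≥ K and every z ∈ ℂ with |z| = 2^k + 2^{k−1}, one has |G(z)| ≥ c·e^{π|Im z|}/|z|. -/

import Mathlib

set_option maxHeartbeats 1600000

lemma norm_cos_sq' (w : ℂ) :
    ‖Complex.cos w‖ ^ 2 =
      (Real.cos w.re * Real.cosh w.im) ^ 2 + (Real.sin w.re * Real.sinh w.im) ^ 2 := by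
  rw [Complex.cos_eq, Complex.sq_norm, Complex.normSq_apply]
  simp [Complex.sub_re, Complex.sub_im, Complex.mul_re, Complex.mul_im,
    Complex.cos_ofReal_re, Complex.sin_ofReal_re, Complex.sinh_ofReal_re,
    Complex.cosh_ofReal_re]
  ring

lemma cos_lb' (n : ℕ) (hn : 24 ≤ n) (z : ℂ) (hz : ‖z‖ = n) :
    Real.exp (Real.pi * |z.im|) / 128 ≤ ‖Complex.cos ((Real.pi : ℂ) * z)‖ := by
  have hre : ((Real.pi : ℂ) * z).re = Real.pi * z.re := by simp
  have him : ((Real.pi : ℂ) * z).im = Real.pi * z.im := by simp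
  have hsq := norm_cos_sq' ((Real.pi : ℂ) * z)
  rw [hre, him] at hsq
  set x := z.re with hx
  set y := z.im with hy
  have hpi3 : (3 : ℝ) ≤ Real.pi := by linarith [Real.pi_gt_three]
  have hpi4 : Real.pi ≤ 4 := Real.pi_le_four
  have hN : (0:ℝ) ≤ ‖Complex.cos ((Real.pi : ℂ) * z)‖ := norm_nonneg _
  have hsc := Real.sin_sq_add_cos_sq (Real.pi * x)
  have hch := Real.cosh_sq (Real.pi * y)
  rcases le_or_gt 1 |y| with hy1 | hy1
  · have hexp : Real.exp (-(Real.pi * |y|)) ≤ 1 := by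
      rw [Real.exp_le_one_iff]; nlinarith
    have hexp2 : (4:ℝ) ≤ Real.exp (Real.pi * |y|) := by
      have := Real.add_one_le_exp (Real.pi * |y|); nlinarith
    have hsinh : Real.exp (Real.pi * |y|) / 4 ≤ Real.sinh (Real.pi * |y|) := by
      rw [Real.sinh_eq]; nlinarith
    have habs : Real.sinh (Real.pi * |y|) = |Real.sinh (Real.pi * y)| := by
      rw [Real.abs_sinh, abs_mul, abs_of_pos Real.pi_pos]
    have h1 : Real.sinh (Real.pi * y) ^ 2 ≤ ‖Complex.cos ((Real.pi : ℂ) * z)‖ ^ 2 := by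
      nlinarith [sq_nonneg (Real.sinh (Real.pi * y)),
        sq_nonneg (Real.cos (Real.pi * x) * Real.cosh (Real.pi * y)),
        sq_nonneg (Real.sin (Real.pi * x)), sq_nonneg (Real.cos (Real.pi * x))]
    have h2 : |Real.sinh (Real.pi * y)| ≤ ‖Complex.cos ((Real.pi : ℂ) * z)‖ := by
      nlinarith [abs_nonneg (Real.sinh (Real.pi * y)), sq_abs (Real.sinh (Real.pi * y))]
    calc Real.exp (Real.pi * |y|) / 128 ≤ Real.exp (Real.pi * |y|) / 4 := by
          have := Real.exp_pos (Real.pi * |y|); nlinarith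
      _ ≤ Real.sinh (Real.pi * |y|) := hsinh
      _ = |Real.sinh (Real.pi * y)| := habs
      _ ≤ _ := h2
  · have hxy : x ^ 2 + y ^ 2 = (n:ℝ) ^ 2 := by
      have : ‖z‖ ^ 2 = x ^ 2 + y ^ 2 := by
        rw [Complex.sq_norm, Complex.normSq_apply]; ring
      rw [hz] at this; linarith
    have hn24 : (24:ℝ) ≤ n := by exact_mod_cast hn
    have hxle : |x| ≤ (n:ℝ) := by
      have := Complex.abs_re_le_norm z
      rw [hz] at this; exact this
    set d : ℝ := n - |x| with hd
    have hd0 : 0 ≤ d := by simp [hd]; linarith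
    have hdsmall : d ≤ 1 / 24 := by
      have h1 : d * ((n:ℝ) + |x|) = (n:ℝ)^2 - x^2 := by
        rw [hd]; rw [← sq_abs x]; ring
      have h2 : (n:ℝ)^2 - x^2 = y^2 := by linarith
      have h3 : y^2 ≤ 1 := by nlinarith [sq_abs y, abs_nonneg y]
      have h4 : 0 ≤ d * ((n:ℝ) + |x| - 24) :=
        mul_nonneg hd0 (by linarith [abs_nonneg x])
      nlinarith
    have hcosx : |Real.cos (Real.pi * x)| = Real.cos (Real.pi * d) := by
      have : Real.cos (Real.pi * x) = Real.cos (Real.pi * |x|) := by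
        rcases abs_cases x with ⟨h1, _⟩ | ⟨h1, _⟩
        · rw [h1]
        · rw [h1]; rw [show Real.pi * -x = -(Real.pi * x) by ring, Real.cos_neg]
      rw [this, show Real.pi * |x| = (n:ℝ) * Real.pi - Real.pi * d by rw [hd]; ring,
        Real.cos_sub, Real.sin_nat_mul_pi]
      have hcn : |Real.cos ((n:ℝ) * Real.pi)| = 1 := by
        have := Real.sin_sq_add_cos_sq ((n:ℝ) * Real.pi)
        rw [Real.sin_nat_mul_pi] at this
        rcases abs_cases (Real.cos ((n:ℝ) * Real.pi)) with ⟨h1, _⟩ | ⟨h1, _⟩ <;> nlinarith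
      have hcd : 0 ≤ Real.cos (Real.pi * d) := by
        apply Real.cos_nonneg_of_mem_Icc
        constructor <;> nlinarith [Real.pi_pos]
      rw [zero_mul, add_zero, abs_mul, hcn, one_mul, abs_of_nonneg hcd]
    have hcd2 : (1:ℝ)/2 ≤ Real.cos (Real.pi * d) := by
      rw [show (1:ℝ)/2 = Real.cos (Real.pi / 3) by rw [Real.cos_pi_div_three]]
      apply Real.cos_le_cos_of_nonneg_of_le_pi
      · positivity
      · nlinarith
      · nlinarith
    have h1 : Real.cos (Real.pi * x) ^ 2 ≤ ‖Complex.cos ((Real.pi : ℂ) * z)‖ ^ 2 := by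
      have hc1 : Real.cos (Real.pi * x) ^ 2 ≤
          (Real.cos (Real.pi * x) * Real.cosh (Real.pi * y)) ^ 2 := by
        have h := Real.one_le_cosh (Real.pi * y)
        nlinarith [sq_nonneg (Real.cos (Real.pi * x))]
      rw [hsq]
      nlinarith [sq_nonneg (Real.sin (Real.pi * x) * Real.sinh (Real.pi * y))]
    have h2 : (1:ℝ)/2 ≤ ‖Complex.cos ((Real.pi : ℂ) * z)‖ := by
      have habs2 : (1:ℝ)/2 ≤ |Real.cos (Real.pi * x)| := by rw [hcosx]; linarith
      nlinarith [sq_abs (Real.cos (Real.pi * x))]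
    have hexp : Real.exp (Real.pi * |y|) ≤ 64 := by
      have h3 : Real.pi * |y| ≤ 4 := by nlinarith [abs_nonneg y]
      have h4 : Real.exp (Real.pi * |y|) ≤ Real.exp 4 := Real.exp_le_exp.2 h3
      have h5 : Real.exp 4 = Real.exp 1 ^ 4 := by
        rw [← Real.exp_nat_mul]; norm_num
      have h6 : Real.exp 1 ≤ 2.7182818286 := Real.exp_one_lt_d9.le
      have h7 : Real.exp 1 ^ 4 ≤ 2.7182818286 ^ 4 :=
        pow_le_pow_left₀ (Real.exp_pos 1).le h6 4
      have h8 : (2.7182818286 : ℝ) ^ 4 ≤ 64 := by norm_num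
      linarith
    linarith

/-- **Lower bound for `G` on lacunary circles.**
For the entire function
`G(z) = cos πz · (1/(z - 1/2) + ∑_{k≥10} (1/(z - 2^k + 1/2) - 1/(z - 2^k - 1/2)))`
there are `c > 0` and `K ∈ ℕ` such that `|G(z)| ≥ c e^{π|Im z|}/|z|` whenever
`|z| = 2^k + 2^{k-1}` with `k ≥ K`. -/
theorem stmt5 (G : ℂ → ℂ) (hGdiff : Differentiable ℂ G)
    (hGformula : ∀ z : ℂ, z ≠ 1 / 2 →
      (∀ k : ℕ, z ≠ 2 ^ (k + 10) + 1 / 2 ∧ z ≠ 2 ^ (k + 10) - 1 / 2) →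
      G z = Complex.cos ((Real.pi : ℂ) * z) *
        (1 / (z - 1 / 2) + ∑' k : ℕ,
          (1 / (z - 2 ^ (k + 10) + 1 / 2) - 1 / (z - 2 ^ (k + 10) - 1 / 2)))) :
    ∃ c > (0:ℝ), ∃ K : ℕ, ∀ k : ℕ, K ≤ k → ∀ z : ℂ,
      ‖z‖ = 2 ^ k + 2 ^ (k - 1) →
      c * Real.exp (Real.pi * |z.im|) / ‖z‖ ≤ ‖G z‖ := by
  refine ⟨1/512, by norm_num, 10, ?_⟩
  intro k hk z hz
  obtain ⟨j, rfl⟩ : ∃ j, k = j + 10 := ⟨k - 10, by omega⟩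
  have hmono : ∀ a b : ℕ, a ≤ b → (2:ℝ)^a ≤ (2:ℝ)^b := fun a b h =>
    pow_le_pow_right₀ (by norm_num) h
  have hone : ∀ i : ℕ, (1:ℝ) ≤ 2 ^ i := fun i => one_le_pow₀ (by norm_num)
  have hz3 : ‖z‖ = 3 * 2 ^ (j + 9) := by
    rw [hz, show j+10-1 = j+9 by omega, show j+10 = (j+9)+1 by omega, pow_succ]; ring
  -- the formula applies at z
  have hz12 : z ≠ 1 / 2 := by
    intro h; rw [h] at hz3
    have h1 : ‖(1/2 : ℂ)‖ = 1/2 := by norm_num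
    rw [h1] at hz3
    linarith [hone (j+9)]
  have hne : ∀ m : ℕ, z ≠ 2 ^ (m + 10) + 1 / 2 ∧ z ≠ 2 ^ (m + 10) - 1 / 2 := by
    intro m
    constructor
    · intro h; rw [h] at hz3
      have h1 : ((2:ℂ) ^ (m+10) + 1/2) = (((2:ℝ) ^ (m+10) + 1/2 : ℝ) : ℂ) := by
        push_cast; ring
      rw [h1, Complex.norm_real,
        Real.norm_of_nonneg (show (0:ℝ) ≤ (2:ℝ)^(m+10)+1/2 by positivity)] at hz3
      have key : ((3 * 2^(j+10) : ℕ) : ℝ) = ((2^(m+11) + 1 : ℕ) : ℝ) := by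
        push_cast
        rw [show (2:ℝ)^(j+10) = 2^(j+9)*2 from pow_succ 2 (j+9),
          show (2:ℝ)^(m+11) = 2^(m+10)*2 from pow_succ 2 (m+10)]
        linarith
      have keyn : 3 * 2^(j+10) = 2^(m+11) + 1 := Nat.cast_injective key
      have e1 : (2:ℕ)^(j+10) = 2*2^(j+9) := by rw [pow_succ]; ring
      have e2 : (2:ℕ)^(m+11) = 2*2^(m+10) := by rw [pow_succ]; ring
      omega
    · intro h; rw [h] at hz3
      have h1 : ((2:ℂ) ^ (m+10) - 1/2) = (((2:ℝ) ^ (m+10) - 1/2 : ℝ) : ℂ) := by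
        push_cast; ring
      have hge : (0:ℝ) ≤ (2:ℝ)^(m+10) - 1/2 := by linarith [hone (m+10)]
      rw [h1, Complex.norm_real, Real.norm_of_nonneg hge] at hz3
      have key : ((3 * 2^(j+10) + 1 : ℕ) : ℝ) = ((2^(m+11) : ℕ) : ℝ) := by
        push_cast
        rw [show (2:ℝ)^(j+10) = 2^(j+9)*2 from pow_succ 2 (j+9),
          show (2:ℝ)^(m+11) = 2^(m+10)*2 from pow_succ 2 (m+10)]
        linarith
      have keyn : 3 * 2^(j+10) + 1 = 2^(m+11) := Nat.cast_injective key
      have e1 : (2:ℕ)^(j+10) = 2*2^(j+9) := by rw [pow_succ]; ring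
      have e2 : (2:ℕ)^(m+11) = 2*2^(m+10) := by rw [pow_succ]; ring
      omega
  rw [hGformula z hz12 hne, norm_mul]
  -- bound the tail sum
  set f : ℕ → ℂ :=
    fun m => (1 / (z - 2 ^ (m + 10) + 1 / 2) - 1 / (z - 2 ^ (m + 10) - 1 / 2)) with hf
  have hw : ∀ m : ℕ, (2:ℝ)^(j+9) ≤ ‖z - 2^(m+10)‖ ∧ (2:ℝ)^(m+8) ≤ ‖z - 2^(m+10)‖ := by
    intro m
    have hc : ‖((2:ℂ)^(m+10))‖ = (2:ℝ)^(m+10) := by rw [norm_pow]; norm_num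
    have hlb1 : ‖z‖ - ‖((2:ℂ)^(m+10))‖ ≤ ‖z - 2^(m+10)‖ := norm_sub_norm_le _ _
    have hlb2 : ‖((2:ℂ)^(m+10))‖ - ‖z‖ ≤ ‖z - 2^(m+10)‖ := by
      rw [norm_sub_rev] at hlb1 ⊢; exact norm_sub_norm_le _ _
    rw [hc, hz3] at hlb1 hlb2
    rcases le_or_gt m j with hmj | hmj
    · have e1 : (2:ℝ)^(m+10) ≤ 2^(j+10) := hmono _ _ (by omega)
      have e2 : (2:ℝ)^(j+10) = 2 * 2^(j+9) := by rw [pow_succ]; ring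
      have e3 : (2:ℝ)^(m+8) ≤ 2^(j+9) := hmono _ _ (by omega)
      constructor <;> linarith
    · have e1 : (2:ℝ)^(j+9) ≤ 2^(m+8) := hmono _ _ (by omega)
      have e2 : (2:ℝ)^(m+10) = 4 * 2^(m+8) := by
        rw [show m+10 = (m+8)+2 by omega, pow_add]; ring
      constructor <;> linarith
  have hterm : ∀ m : ℕ, ‖f m‖ ≤ ((2:ℝ)^(j+16))⁻¹ * (1/2)^m := by
    intro m
    have hne1 : z - 2 ^ (m + 10) + 1 / 2 ≠ 0 := by
      intro h; exact (hne m).2 (by linear_combination h)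
    have hne2 : z - 2 ^ (m + 10) - 1 / 2 ≠ 0 := by
      intro h; exact (hne m).1 (by linear_combination h)
    have he : ((z - 2^(m+10))^2 - 1/4 : ℂ)
        = (z - 2^(m+10) + 1/2) * (z - 2^(m+10) - 1/2) := by ring
    have hfm : f m = -(1/((z - 2^(m+10))^2 - 1/4)) := by
      show (1 / (z - 2 ^ (m + 10) + 1 / 2) - 1 / (z - 2 ^ (m + 10) - 1 / 2)) = _
      rw [he, div_sub_div _ _ hne1 hne2, neg_div']
      congr 1
      ring
    have hden0 : (2:ℝ)^(m+j+16) ≤ ‖(z - 2^(m+10))^2 - (1/4 : ℂ)‖ := by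
      have h1 : ‖(z - 2^(m+10))^2‖ - ‖(1/4 : ℂ)‖ ≤ ‖(z - 2^(m+10))^2 - (1/4:ℂ)‖ :=
        norm_sub_norm_le _ _
      have h2 : ‖(1/4 : ℂ)‖ = 1/4 := by norm_num
      have h3 : ‖(z - 2^(m+10))^2‖ = ‖z - 2^(m+10)‖^2 := norm_pow _ _
      have h4 : (2:ℝ)^(j+9) * 2^(m+8) ≤ ‖z - 2^(m+10)‖^2 := by
        have ⟨ha, hb⟩ := hw m
        have h0 : (0:ℝ) ≤ 2^(j+9) := by positivity
        nlinarith
      have h5 : (2:ℝ)^(j+9) * 2^(m+8) = 2^(m+j+17) := by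
        rw [← pow_add]; congr 1; omega
      have h6 : (2:ℝ)^(m+j+17) = 2 * 2^(m+j+16) := by
        rw [show m+j+17 = (m+j+16)+1 by omega, pow_succ]; ring
      have h7 := hone (m+j+16)
      rw [h2, h3] at h1
      linarith
    have hnorm : ‖f m‖ = ‖(z - 2^(m+10))^2 - (1/4 : ℂ)‖⁻¹ := by
      rw [hfm, norm_neg, norm_div, norm_one, one_div]
    rw [hnorm]
    have hpos : (0:ℝ) < 2^(m+j+16) := by positivity
    have h8 : ‖(z - 2^(m+10))^2 - (1/4 : ℂ)‖⁻¹ ≤ ((2:ℝ)^(m+j+16))⁻¹ :=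
      inv_anti₀ hpos hden0
    have h9 : ((2:ℝ)^(m+j+16))⁻¹ = ((2:ℝ)^(j+16))⁻¹ * (1/2)^m := by
      rw [show m+j+16 = (j+16)+m by omega, pow_add, mul_inv, div_pow, one_pow, one_div]
    linarith
  have hsumg : Summable (fun m : ℕ => ((2:ℝ)^(j+16))⁻¹ * (1/2)^m) :=
    (summable_geometric_of_lt_one (by norm_num) (by norm_num)).mul_left _
  have hsumf : Summable (fun m => ‖f m‖) :=
    Summable.of_nonneg_of_le (fun m => norm_nonneg _) hterm hsumg
  have h10 : ‖∑' m, f m‖ ≤ ∑' m, ‖f m‖ := norm_tsum_le_tsum_norm hsumf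
  have h11 : ∑' m, ‖f m‖ ≤ ∑' m : ℕ, ((2:ℝ)^(j+16))⁻¹ * (1/2)^m :=
    Summable.tsum_le_tsum hterm hsumf hsumg
  have h12 : ∑' m : ℕ, ((2:ℝ)^(j+16))⁻¹ * (1/2)^m = ((2:ℝ)^(j+16))⁻¹ * 2 := by
    rw [tsum_mul_left, tsum_geometric_of_lt_one (by norm_num) (by norm_num)]
    norm_num
  have h13 : ((2:ℝ)^(j+16))⁻¹ * 2 = ((2:ℝ)^(j+15))⁻¹ := by
    rw [show j+16 = (j+15)+1 by omega, pow_succ, mul_inv]; ring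
  have hT : ‖∑' m, f m‖ ≤ ((2:ℝ)^(j+15))⁻¹ := by linarith
  -- bound the main term from below
  have hmain : ((2:ℝ)^(j+11))⁻¹ ≤ ‖1/(z - 1/2)‖ := by
    have h1 : ‖z - 1/2‖ ≤ ‖z‖ + ‖(1/2 : ℂ)‖ := norm_sub_le _ _
    have h2 : ‖(1/2 : ℂ)‖ = 1/2 := by norm_num
    have h3 : (3:ℝ) * 2^(j+9) + 1/2 ≤ 2^(j+11) := by
      have e : (2:ℝ)^(j+11) = 4 * 2^(j+9) := by
        rw [show j+11 = (j+9)+2 by omega, pow_add]; ring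
      linarith [hone (j+9)]
    have h4 : ‖z - 1/2‖ ≤ 2^(j+11) := by rw [h2, hz3] at h1; linarith
    have h5 : (0:ℝ) < ‖z - 1/2‖ := by
      rw [norm_pos_iff]
      intro hcon
      exact hz12 (by linear_combination hcon)
    rw [norm_div, norm_one, one_div]
    exact inv_anti₀ h5 h4
  -- lower bound for the S factor
  have hS : ((2:ℝ)^(j+11))⁻¹ - ((2:ℝ)^(j+15))⁻¹
      ≤ ‖1/(z - 1/2) + ∑' m, f m‖ := by
    have h1 : ‖(1/(z - 1/2) : ℂ)‖ ≤ ‖1/(z - 1/2) + ∑' m, f m‖ + ‖∑' m, f m‖ := by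
      calc ‖(1/(z - 1/2) : ℂ)‖ = ‖(1/(z - 1/2) + ∑' m, f m) + (-(∑' m, f m))‖ := by
            congr 1; ring
        _ ≤ ‖1/(z - 1/2) + ∑' m, f m‖ + ‖-(∑' m, f m)‖ := norm_add_le _ _
        _ = ‖1/(z - 1/2) + ∑' m, f m‖ + ‖∑' m, f m‖ := by rw [norm_neg]
    linarith
  -- cosine lower bound
  have hcos : Real.exp (Real.pi * |z.im|) / 128 ≤ ‖Complex.cos ((Real.pi : ℂ) * z)‖ := by
    apply cos_lb' (3 * 2^(j+9)) ?_ z ?_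
    · have h512 : (2:ℕ)^9 ≤ 2^(j+9) := Nat.pow_le_pow_right (by norm_num) (by omega)
      have : (24:ℕ) ≤ 3 * 2^9 := by norm_num
      calc (24:ℕ) ≤ 3 * 2^9 := by norm_num
        _ ≤ 3 * 2^(j+9) := Nat.mul_le_mul_left 3 h512
    · rw [hz3]; push_cast; ring
  -- combine
  set P : ℝ := (2:ℝ)^(j+9) with hPdef
  have hP : (0:ℝ) < P := by positivity
  have hP1 : (1:ℝ) ≤ P := hone (j+9)
  have e11 : (2:ℝ)^(j+11) = 4*P := by
    rw [hPdef, show j+11 = (j+9)+2 by omega, pow_add]; ring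
  have e15 : (2:ℝ)^(j+15) = 64*P := by
    rw [hPdef, show j+15 = (j+9)+6 by omega, pow_add]; ring
  rw [e11] at hmain hS
  rw [e15] at hT hS
  have hE : (0:ℝ) < Real.exp (Real.pi * |z.im|) := Real.exp_pos _
  have hAS : (4*P)⁻¹ - (64*P)⁻¹ ≤ ‖1/(z - 1/2) + ∑' m, f m‖ := hS
  have hA0 : (0:ℝ) ≤ (4*P)⁻¹ - (64*P)⁻¹ := by
    have : (64*P)⁻¹ ≤ (4*P)⁻¹ := inv_anti₀ (by linarith) (by linarith)
    linarith
  rw [hz3]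
  calc (1:ℝ)/512 * Real.exp (Real.pi * |z.im|) / (3 * P)
      ≤ Real.exp (Real.pi * |z.im|) / 128 * ((4*P)⁻¹ - (64*P)⁻¹) := by
        have hA15 : (4*P)⁻¹ - (64*P)⁻¹ = 15/(64*P) := by
          field_simp
          ring
        rw [hA15,
          show Real.exp (Real.pi * |z.im|) / 128 * (15/(64*P))
            = 15 * Real.exp (Real.pi * |z.im|) / (8192 * P) by ring,
          div_le_div_iff₀ (by linarith) (by linarith)]
        nlinarith [mul_pos hE hP]
    _ ≤ ‖Complex.cos ((Real.pi : ℂ) * z)‖ * ‖1/(z - 1/2) + ∑' m, f m‖ :=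
        mul_le_mul hcos hAS hA0 (norm_nonneg _)
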